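/- There exists an optimal multiplier λ (minimizing g over all multipliers) such that there are no indices i < j < k < l with λ l i > 0 and λ k j > 0. -/

import Mathlib

open Finset

/-- A multiplier matrix: nonnegative, lower-triangular (`lam k j = 0` whenever `j > k`),
with each row `k` summing to `1` over `j ≤ k`. -/
def IsMultiplier {m : ℕ} (lam : Fin m → Fin m → ℝ) : Prop :=
  (∀ k j, 0 ≤ lam k j) ∧ (∀ k j : Fin m, k < j → lam k j = 0) ∧
  (∀ k, ∑ j ∈ Finset.Iic k, lam k j = 1)

/-- The virtual value `φ(i, λ) = v i − (1 / q i) · ∑_{k ≥ i} q k (v k − v i) λ k i`. -/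
noncomputable def phi {m : ℕ} (v q : Fin m → ℝ) (lam : Fin m → Fin m → ℝ) (i : Fin m) : ℝ :=
  v i - (1 / q i) * ∑ k ∈ Finset.Ici i, q k * (v k - v i) * lam k i

/-- An allocation vector: monotone nondecreasing with entries in `[0, 1]`. -/
def IsAlloc {m : ℕ} (x : Fin m → ℝ) : Prop :=
  Monotone x ∧ ∀ i, 0 ≤ x i ∧ x i ≤ 1

/-- `g(λ)` is the supremum over allocation vectors `x` of `∑ i, q i · φ(i, λ) · x i`. -/
noncomputable def g {m : ℕ} (v q : Fin m → ℝ) (lam : Fin m → Fin m → ℝ) : ℝ :=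
  sSup {s : ℝ | ∃ x : Fin m → ℝ, IsAlloc x ∧ s = ∑ i, q i * phi v q lam i * x i}

lemma sum_eq_two_point {α : Type*} [DecidableEq α] (s : Finset α) (f : α → ℝ)
    (a b : α) (ha : a ∈ s) (hb : b ∈ s) (hab : a ≠ b)
    (h : ∀ x ∈ s, x ≠ a → x ≠ b → f x = 0) : ∑ x ∈ s, f x = f a + f b := by
  have hsub : ({a, b} : Finset α) ⊆ s := by
    intro x hx
    rcases Finset.mem_insert.1 hx with rfl | hx
    · exact ha
    · rcases Finset.mem_singleton.1 hx with rfl; exact hb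
  rw [← Finset.sum_subset hsub (fun x hx hnx => by
    simp only [Finset.mem_insert, Finset.mem_singleton, not_or] at hnx
    exact h x hx hnx.1 hnx.2)]
  exact Finset.sum_pair hab

lemma abel_bound (N : ℕ) (A X : ℕ → ℝ) (hmono : Monotone X) (h0 : 0 ≤ X 0)
    (h1 : ∀ i, X i ≤ 1) (M : ℝ) (hM : 0 ≤ M)
    (hB : ∀ t < N, ∑ i ∈ Finset.Ico t N, A i ≤ M) :
    ∑ i ∈ Finset.range N, A i * X i ≤ M := by
  rcases Nat.eq_zero_or_pos N with rfl | hN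
  · simpa using hM
  set X' : ℕ → ℝ := fun t => if t = 0 then 0 else X (t - 1) with hX'
  have hX'succ : ∀ t, X' (t + 1) = X t := fun t => by simp [hX']
  set y : ℕ → ℝ := fun t => X' (t + 1) - X' t with hy
  have hXX : ∀ i, X i = ∑ t ∈ Finset.range (i + 1), y t := by
    intro i
    rw [hy, Finset.sum_range_sub X' (i + 1), hX'succ]
    simp [hX']
  have hy0 : ∀ t, 0 ≤ y t := by
    intro t
    have hyt : y t = X' (t + 1) - X' t := by rw [hy]
    cases t with
    | zero =>
        rw [hyt, hX'succ]
        simp only [hX']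
        simpa using h0
    | succ s =>
        rw [hyt, hX'succ, hX'succ]
        exact sub_nonneg.2 (hmono (Nat.le_succ s))
  calc ∑ i ∈ Finset.range N, A i * X i
      = ∑ i ∈ Finset.range N, ∑ t ∈ Finset.range (i + 1), A i * y t := by
        refine Finset.sum_congr rfl fun i _ => ?_
        rw [hXX i, Finset.mul_sum]
    _ = ∑ t ∈ Finset.range N, ∑ i ∈ Finset.Ico t N, A i * y t := by
        rw [Finset.range_eq_Ico, Finset.sum_Ico_Ico_comm 0 N (fun t i => A i * y t)]
        simp only [Finset.range_eq_Ico]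
    _ = ∑ t ∈ Finset.range N, (∑ i ∈ Finset.Ico t N, A i) * y t := by
        refine Finset.sum_congr rfl fun t _ => ?_
        rw [Finset.sum_mul]
    _ ≤ ∑ t ∈ Finset.range N, M * y t := by
        refine Finset.sum_le_sum fun t ht => ?_
        exact mul_le_mul_of_nonneg_right (hB t (Finset.mem_range.1 ht)) (hy0 t)
    _ = M * X' N := by rw [← Finset.mul_sum, hy, Finset.sum_range_sub X' N]; simp [hX']
    _ ≤ M := by
        have hle : X' N ≤ 1 := by
          simp only [hX']
          split
          · linarith
          · exact h1 _
        nlinarith [hM]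

lemma sum_Ici_eq {n : ℕ} (c : Fin (n+1) → ℝ) (t : Fin (n+1)) :
    ∑ i ∈ Finset.Ici t, c i
      = ∑ i ∈ Finset.Ico t.val (n+1), (if h : i < n+1 then c ⟨i, h⟩ else 0) := by
  set F : ℕ → ℝ := fun i => if h : i < n+1 then (if t ≤ (⟨i, h⟩ : Fin (n+1)) then c ⟨i, h⟩ else 0) else 0 with hF
  have h1 : ∑ i ∈ Finset.Ici t, c i = ∑ i : Fin (n+1), if t ≤ i then c i else 0 := by
    rw [← Finset.sum_filter]
    refine (Finset.sum_congr ?_ fun _ _ => rfl)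
    ext i; simp
  have h3 : ∑ i : Fin (n+1), (if t ≤ i then c i else 0) = ∑ i ∈ Finset.range (n+1), F i := by
    rw [← Fin.sum_univ_eq_sum_range F (n+1)]
    refine Finset.sum_congr rfl fun i _ => ?_
    rw [hF]
    simp only [i.isLt, dif_pos, Fin.eta]
  rw [h1, h3]
  have h2 : ∀ i ∈ Finset.range (n+1), i ∉ Finset.Ico t.val (n+1) → F i = 0 := by
    intro i hi hni
    have hilt : i < n+1 := Finset.mem_range.1 hi
    have hnle : ¬ t.val ≤ i := fun hle => hni (Finset.mem_Ico.2 ⟨hle, hilt⟩)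
    rw [hF]
    simp only [hilt, dif_pos]
    rw [if_neg (by simpa [Fin.le_def] using hnle)]
  rw [← Finset.sum_subset (fun i hi => Finset.mem_range.2 (Finset.mem_Ico.1 hi).2) h2]
  refine Finset.sum_congr rfl fun i hi => ?_
  have hilt : i < n+1 := (Finset.mem_Ico.1 hi).2
  have hle : t.val ≤ i := (Finset.mem_Ico.1 hi).1
  rw [hF]
  simp only [hilt, dif_pos]
  rw [if_pos (by simpa [Fin.le_def] using hle)]


noncomputable def Sfun {n : ℕ} (v q : Fin (n+1) → ℝ) (lam : Fin (n+1) → Fin (n+1) → ℝ)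
    (t : Fin (n+1)) : ℝ :=
  ∑ i ∈ Finset.Ici t, q i * phi v q lam i

noncomputable def gmax {n : ℕ} (v q : Fin (n+1) → ℝ) (lam : Fin (n+1) → Fin (n+1) → ℝ) : ℝ :=
  Finset.univ.sup' Finset.univ_nonempty (Sfun v q lam)

lemma Ici_last {n : ℕ} : (Finset.Ici (Fin.last n)) = {Fin.last n} := by
  ext s
  simp only [Finset.mem_Ici, Finset.mem_singleton]
  constructor
  · intro h; exact le_antisymm (Fin.le_last s) h |>.symm ▸ rfl
  · rintro rfl; exact le_refl _

lemma phi_last {n : ℕ} (v q : Fin (n+1) → ℝ) (lam : Fin (n+1) → Fin (n+1) → ℝ) :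
    phi v q lam (Fin.last n) = v (Fin.last n) := by
  unfold phi
  rw [Ici_last, Finset.sum_singleton]
  ring

lemma gmax_nonneg {n : ℕ} (v q : Fin (n+1) → ℝ) (hv0 : ∀ i, 0 ≤ v i) (hq : ∀ i, 0 < q i)
    (lam : Fin (n+1) → Fin (n+1) → ℝ) : 0 ≤ gmax v q lam := by
  have h1 : Sfun v q lam (Fin.last n) = q (Fin.last n) * v (Fin.last n) := by
    unfold Sfun
    rw [Ici_last, Finset.sum_singleton, phi_last]
  refine le_trans ?_ (Finset.le_sup' (Sfun v q lam) (Finset.mem_univ (Fin.last n)))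
  rw [h1]
  exact mul_nonneg (hq _).le (hv0 _)

/-- The indicator allocation. -/
lemma indicator_sum {n : ℕ} (v q : Fin (n+1) → ℝ) (lam : Fin (n+1) → Fin (n+1) → ℝ)
    (t : Fin (n+1)) :
    ∑ i, q i * phi v q lam i * (if t ≤ i then (1:ℝ) else 0) = Sfun v q lam t := by
  unfold Sfun
  have h : ∀ i, q i * phi v q lam i * (if t ≤ i then (1:ℝ) else 0)
      = if t ≤ i then q i * phi v q lam i else 0 := fun i => by split <;> ring
  simp_rw [h]
  rw [← Finset.sum_filter]
  refine (Finset.sum_congr ?_ fun i _ => rfl)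
  ext i; simp

lemma g_eq {n : ℕ} (v q : Fin (n+1) → ℝ) (hv0 : ∀ i, 0 ≤ v i) (hq : ∀ i, 0 < q i)
    (lam : Fin (n+1) → Fin (n+1) → ℝ) : g v q lam = gmax v q lam := by
  set M := gmax v q lam with hM
  have hub : ∀ s ∈ {s : ℝ | ∃ x : Fin (n+1) → ℝ, IsAlloc x ∧ s = ∑ i, q i * phi v q lam i * x i},
      s ≤ M := by
    rintro s ⟨x, ⟨hxm, hxb⟩, rfl⟩
    set A : ℕ → ℝ := fun i => if h : i < n+1 then q ⟨i, h⟩ * phi v q lam ⟨i, h⟩ else 0 with hA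
    set X : ℕ → ℝ := fun i => if h : i < n+1 then x ⟨i, h⟩ else 1 with hX
    have heq : ∑ i, q i * phi v q lam i * x i = ∑ i ∈ Finset.range (n+1), A i * X i := by
      rw [← Fin.sum_univ_eq_sum_range (fun i => A i * X i) (n+1)]
      refine Finset.sum_congr rfl fun i _ => ?_
      simp only [hA, hX, i.isLt, dif_pos, Fin.eta]
    rw [heq]
    refine abel_bound (n+1) A X ?_ ?_ ?_ M (gmax_nonneg v q hv0 hq lam) ?_
    · intro a b hab
      simp only [hX]
      by_cases ha : a < n+1
      · by_cases hb : b < n+1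
        · rw [dif_pos ha, dif_pos hb]
          exact hxm (by exact hab)
        · rw [dif_pos ha, dif_neg hb]
          exact (hxb _).2
      · have hb : ¬ b < n+1 := fun hbl => ha (lt_of_le_of_lt hab hbl)
        rw [dif_neg ha, dif_neg hb]
    · simp only [hX]
      rw [dif_pos (Nat.succ_pos n)]
      exact (hxb _).1
    · intro i
      simp only [hX]
      by_cases h : i < n+1
      · rw [dif_pos h]; exact (hxb _).2
      · rw [dif_neg h]
    · intro t ht
      have h1 : ∑ i ∈ Finset.Ico t (n+1), A i = Sfun v q lam ⟨t, ht⟩ := by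
        rw [Sfun, sum_Ici_eq (fun i => q i * phi v q lam i) ⟨t, ht⟩]
      rw [h1]
      exact Finset.le_sup' (Sfun v q lam) (Finset.mem_univ _)
  have hmem : M ∈ {s : ℝ | ∃ x : Fin (n+1) → ℝ, IsAlloc x ∧ s = ∑ i, q i * phi v q lam i * x i} := by
    obtain ⟨t0, _, ht0⟩ := Finset.exists_mem_eq_sup' Finset.univ_nonempty (Sfun v q lam)
    refine ⟨fun i => if t0 ≤ i then 1 else 0, ⟨?_, fun i => ?_⟩, ?_⟩
    · intro a b hab
      dsimp only
      by_cases h : t0 ≤ a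
      · rw [if_pos h, if_pos (le_trans h hab)]
      · rw [if_neg h]
        split <;> norm_num
    · dsimp only
      constructor <;> split <;> norm_num
    · rw [indicator_sum v q lam t0]
      exact ht0
  exact le_antisymm (csSup_le ⟨M, hmem⟩ hub) (le_csSup ⟨M, hub⟩ hmem)

lemma cont_sup' {ι β : Type*} [TopologicalSpace β] {s : Finset ι} (hs : s.Nonempty)
    (f : ι → β → ℝ) (hf : ∀ i, Continuous (f i)) :
    Continuous fun x => s.sup' hs fun i => f i x := by
  induction hs using Finset.Nonempty.cons_induction with
  | singleton a => simpa using hf a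
  | cons a s h hs ih =>
      simp only [Finset.sup'_cons hs]
      exact (hf a).max ih


section Main

variable {n : ℕ} (v q : Fin (n+1) → ℝ)

lemma qphi (hq : ∀ i, 0 < q i) (lam : Fin (n+1) → Fin (n+1) → ℝ) (i : Fin (n+1)) :
    q i * phi v q lam i = q i * v i - ∑ k ∈ Finset.Ici i, q k * (v k - v i) * lam k i := by
  unfold phi
  have hqi : q i ≠ 0 := (hq i).ne'
  field_simp

lemma hcoord (k j : Fin (n+1)) :
    Continuous fun lam : Fin (n+1) → Fin (n+1) → ℝ => lam k j :=
  (continuous_apply j).comp (continuous_apply k)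

lemma cont_Sfun (t : Fin (n+1)) : Continuous fun lam => Sfun v q lam t := by
  unfold Sfun phi
  exact continuous_finset_sum _ fun i _ =>
    continuous_const.mul (continuous_const.sub (continuous_const.mul
      (continuous_finset_sum _ fun k _ => continuous_const.mul (hcoord k i))))

lemma cont_gmax : Continuous (gmax v q) := by
  unfold gmax
  exact cont_sup' Finset.univ_nonempty (fun t lam => Sfun v q lam t) (cont_Sfun v q)

lemma K_compact : IsCompact {lam : Fin (n+1) → Fin (n+1) → ℝ | IsMultiplier lam} := by
  have hclosed : IsClosed {lam : Fin (n+1) → Fin (n+1) → ℝ | IsMultiplier lam} := by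
    have h1 : {lam : Fin (n+1) → Fin (n+1) → ℝ | IsMultiplier lam}
        = (⋂ k, ⋂ j, {lam | 0 ≤ lam k j}) ∩ ((⋂ k, ⋂ j, {lam | k < j → lam k j = 0})
          ∩ (⋂ k, {lam | ∑ j ∈ Finset.Iic k, lam k j = 1})) := by
      ext lam
      simp only [Set.mem_setOf_eq, Set.mem_inter_iff, Set.mem_iInter, IsMultiplier]
    rw [h1]
    refine IsClosed.inter (isClosed_iInter fun k => isClosed_iInter fun j =>
        isClosed_le continuous_const (hcoord k j)) (IsClosed.inter ?_ ?_)
    · refine isClosed_iInter fun k => isClosed_iInter fun j => ?_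
      by_cases h : k < j
      · have he : {lam : Fin (n+1) → Fin (n+1) → ℝ | k < j → lam k j = 0}
            = {lam | lam k j = 0} := by ext lam; simp [h]
        rw [he]
        exact isClosed_eq (hcoord k j) continuous_const
      · have he : {lam : Fin (n+1) → Fin (n+1) → ℝ | k < j → lam k j = 0} = Set.univ := by
          ext lam; simp [h]
        rw [he]
        exact isClosed_univ
    · exact isClosed_iInter fun k =>
        isClosed_eq (continuous_finset_sum _ fun j _ => hcoord k j) continuous_const
  have hsub : {lam : Fin (n+1) → Fin (n+1) → ℝ | IsMultiplier lam}
      ⊆ Set.Icc (fun _ _ => 0) (fun _ _ => 1) := by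
    rintro lam ⟨h0, htri, hsum⟩
    constructor
    · intro k; intro j; exact h0 k j
    · intro k; intro j
      by_cases h : j ≤ k
      · calc lam k j ≤ ∑ j' ∈ Finset.Iic k, lam k j' :=
              Finset.single_le_sum (fun j' _ => h0 k j') (Finset.mem_Iic.2 h)
          _ = 1 := hsum k
      · rw [htri k j (lt_of_not_ge h)]
        norm_num
  exact IsCompact.of_isClosed_subset isCompact_Icc hclosed hsub


lemma uncross (hvmono : ∀ a b : Fin (n+1), a < b → v a < v b) (hq : ∀ i, 0 < q i)
    (lam : Fin (n+1) → Fin (n+1) → ℝ) (hlam : IsMultiplier lam)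
    (i j k l : Fin (n+1)) (hij : i < j) (hjk : j < k) (hkl : k < l)
    (hli : 0 < lam l i) (hkj : 0 < lam k j) :
    ∃ lam' : Fin (n+1) → Fin (n+1) → ℝ, IsMultiplier lam' ∧
      (∀ t, Sfun v q lam' t ≤ Sfun v q lam t) ∧
      (∑ a, ∑ b, q a * a.val * b.val * lam a b) < ∑ a, ∑ b, q a * a.val * b.val * lam' a b := by
  obtain ⟨h0, htri, hsum⟩ := hlam
  have hkl' : k ≠ l := ne_of_lt hkl
  have hlk' : l ≠ k := hkl'.symm
  have hij' : i ≠ j := ne_of_lt hij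
  have hji' : j ≠ i := hij'.symm
  have hil : i ≤ l := (hij.trans (hjk.trans hkl)).le
  have hjl : j ≤ l := (hjk.trans hkl).le
  have hik : i ≤ k := (hij.trans hjk).le
  have hjk2 : j ≤ k := hjk.le
  have hql : q l ≠ 0 := (hq l).ne'
  have hqk : q k ≠ 0 := (hq k).ne'
  set δ : ℝ := min (q l * lam l i) (q k * lam k j) with hδ
  have hδpos : 0 < δ := lt_min (mul_pos (hq l) hli) (mul_pos (hq k) hkj)
  set μ : Fin (n+1) → Fin (n+1) → ℝ := fun a b =>
    if a = l ∧ b = j then δ / q l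
    else if a = l ∧ b = i then -(δ / q l)
    else if a = k ∧ b = i then δ / q k
    else if a = k ∧ b = j then -(δ / q k) else 0 with hμ
  have val_lj : μ l j = δ / q l := by simp [hμ]
  have val_li : μ l i = -(δ / q l) := by simp [hμ, hij']
  have val_ki : μ k i = δ / q k := by simp [hμ, hkl', hij']
  have val_kj : μ k j = -(δ / q k) := by simp [hμ, hkl', hji']
  have zero_row : ∀ a b, a ≠ l → a ≠ k → μ a b = 0 := by
    intro a b h1 h2; simp [hμ, h1, h2]
  have zero_col : ∀ a b, b ≠ i → b ≠ j → μ a b = 0 := by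
    intro a b h1 h2; simp [hμ, h1, h2]
  set lam' : Fin (n+1) → Fin (n+1) → ℝ := fun a b => lam a b + μ a b with hlam'
  -- row sums of μ vanish
  have hrow : ∀ a, ∑ b ∈ Finset.Iic a, μ a b = 0 := by
    intro a
    by_cases hal : a = l
    · rw [hal]
      rw [sum_eq_two_point (Finset.Iic l) (μ l) i j (Finset.mem_Iic.2 hil)
          (Finset.mem_Iic.2 hjl) hij' (fun x _ hx1 hx2 => zero_col l x hx1 hx2)]
      rw [val_li, val_lj]; ring
    · by_cases hak : a = k
      · rw [hak]
        rw [sum_eq_two_point (Finset.Iic k) (μ k) i j (Finset.mem_Iic.2 hik)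
            (Finset.mem_Iic.2 hjk2) hij' (fun x _ hx1 hx2 => zero_col k x hx1 hx2)]
        rw [val_ki, val_kj]; ring
      · exact Finset.sum_eq_zero fun b _ => zero_row a b hal hak
  have hdivl : δ / q l ≤ lam l i := by
    rw [div_le_iff₀ (hq l)]
    calc δ ≤ q l * lam l i := min_le_left _ _
      _ = lam l i * q l := by ring
  have hdivk : δ / q k ≤ lam k j := by
    rw [div_le_iff₀ (hq k)]
    calc δ ≤ q k * lam k j := min_le_right _ _
      _ = lam k j * q k := by ring
  have hm' : IsMultiplier lam' := by
    refine ⟨?_, ?_, ?_⟩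
    · intro a b
      simp only [hlam']
      by_cases hal : a = l
      · rw [hal]
        by_cases hbj : b = j
        · rw [hbj, val_lj]
          have := div_nonneg hδpos.le (hq l).le
          linarith [h0 l j]
        · by_cases hbi : b = i
          · rw [hbi, val_li]; linarith
          · rw [zero_col l b hbi hbj]; linarith [h0 l b]
      · by_cases hak : a = k
        · rw [hak]
          by_cases hbi : b = i
          · rw [hbi, val_ki]
            have := div_nonneg hδpos.le (hq k).le
            linarith [h0 k i]
          · by_cases hbj : b = j
            · rw [hbj, val_kj]; linarith
            · rw [zero_col k b hbi hbj]; linarith [h0 k b]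
        · rw [zero_row a b hal hak]; linarith [h0 a b]
    · intro a b hab
      simp only [hlam']
      have hμz : μ a b = 0 := by
        simp only [hμ]
        split_ifs with h1 h2 h3 h4
        · exact absurd (h1.1 ▸ h1.2 ▸ hab) (not_lt.2 hjl)
        · exact absurd (h2.1 ▸ h2.2 ▸ hab) (not_lt.2 hil)
        · exact absurd (h3.1 ▸ h3.2 ▸ hab) (not_lt.2 hik)
        · exact absurd (h4.1 ▸ h4.2 ▸ hab) (not_lt.2 hjk2)
        · rfl
      rw [hμz, htri a b hab]; ring
    · intro a
      simp only [hlam']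
      rw [Finset.sum_add_distrib, hsum a, hrow a]; ring
  refine ⟨lam', hm', ?_, ?_⟩
  · -- Sfun decreases
    intro t
    have hSd : Sfun v q lam' t = Sfun v q lam t
        - ∑ b ∈ Finset.Ici t, (∑ a ∈ Finset.Ici b, q a * (v a - v b) * μ a b) := by
      unfold Sfun
      rw [← Finset.sum_sub_distrib]
      refine Finset.sum_congr rfl fun b _ => ?_
      rw [qphi v q hq lam' b, qphi v q hq lam b]
      have : ∑ a ∈ Finset.Ici b, q a * (v a - v b) * lam' a b
          = ∑ a ∈ Finset.Ici b, q a * (v a - v b) * lam a b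
            + ∑ a ∈ Finset.Ici b, q a * (v a - v b) * μ a b := by
        rw [← Finset.sum_add_distrib]
        refine Finset.sum_congr rfl fun a _ => ?_
        simp only [hlam']; ring
      rw [this]; ring
    set G : Fin (n+1) → ℝ := fun b => ∑ a ∈ Finset.Ici b, q a * (v a - v b) * μ a b with hG
    have hGzero : ∀ b, b ≠ i → b ≠ j → G b = 0 := by
      intro b h1 h2
      exact Finset.sum_eq_zero fun a _ => by rw [zero_col a b h1 h2]; ring
    have hGi : G i = δ * (v k - v l) := by
      simp only [hG]
      rw [sum_eq_two_point (Finset.Ici i) _ l k (Finset.mem_Ici.2 hil) (Finset.mem_Ici.2 hik)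
          hlk' (fun x _ hx1 hx2 => by rw [zero_row x i hx1 hx2]; ring)]
      rw [val_li, val_ki]
      field_simp [hql, hqk]
      ring
    have hGj : G j = δ * (v l - v k) := by
      simp only [hG]
      rw [sum_eq_two_point (Finset.Ici j) _ l k (Finset.mem_Ici.2 hjl) (Finset.mem_Ici.2 hjk2)
          hlk' (fun x _ hx1 hx2 => by rw [zero_row x j hx1 hx2]; ring)]
      rw [val_lj, val_kj]
      field_simp [hql, hqk]
      ring
    have hvkl : v k < v l := hvmono k l hkl
    have hD : 0 ≤ ∑ b ∈ Finset.Ici t, G b := by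
      by_cases hti : t ≤ i
      · have htj : t ≤ j := hti.trans hij.le
        rw [sum_eq_two_point (Finset.Ici t) G i j (Finset.mem_Ici.2 hti) (Finset.mem_Ici.2 htj)
            hij' (fun x _ hx1 hx2 => hGzero x hx1 hx2)]
        rw [hGi, hGj]; ring_nf; exact le_refl 0
      · by_cases htj : t ≤ j
        · rw [Finset.sum_eq_single_of_mem j (Finset.mem_Ici.2 htj) (fun x hx hxj =>
            hGzero x (fun hxi => hti (hxi ▸ Finset.mem_Ici.1 hx)) hxj)]
          rw [hGj]
          have : 0 ≤ v l - v k := by linarith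
          positivity
        · rw [Finset.sum_eq_zero fun x hx => hGzero x
            (fun hxi => hti (hxi ▸ Finset.mem_Ici.1 hx))
            (fun hxj => htj (hxj ▸ Finset.mem_Ici.1 hx))]
    rw [hSd]
    exact sub_le_self _ hD
  · -- potential strictly increases
    have hsplit : ∑ a, ∑ b, q a * a.val * b.val * lam' a b
        = (∑ a, ∑ b, q a * a.val * b.val * lam a b)
          + ∑ a, ∑ b, q a * a.val * b.val * μ a b := by
      rw [← Finset.sum_add_distrib]
      refine Finset.sum_congr rfl fun a _ => ?_
      rw [← Finset.sum_add_distrib]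
      refine Finset.sum_congr rfl fun b _ => ?_
      simp only [hlam']; ring
    set F : Fin (n+1) → ℝ := fun a => ∑ b, q a * a.val * b.val * μ a b with hF
    have hFzero : ∀ a, a ≠ l → a ≠ k → F a = 0 := by
      intro a h1 h2
      exact Finset.sum_eq_zero fun b _ => by rw [zero_row a b h1 h2]; ring
    have hFl : F l = δ * l.val * ((j.val : ℝ) - i.val) := by
      simp only [hF]
      rw [sum_eq_two_point Finset.univ _ i j (Finset.mem_univ i) (Finset.mem_univ j) hij'
          (fun x _ hx1 hx2 => by rw [zero_col l x hx1 hx2]; ring)]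
      rw [val_li, val_lj]
      field_simp [hql, hqk]
      ring
    have hFk : F k = δ * k.val * ((i.val : ℝ) - j.val) := by
      simp only [hF]
      rw [sum_eq_two_point Finset.univ _ i j (Finset.mem_univ i) (Finset.mem_univ j) hij'
          (fun x _ hx1 hx2 => by rw [zero_col k x hx1 hx2]; ring)]
      rw [val_ki, val_kj]
      field_simp [hql, hqk]
      ring
    have hFsum : ∑ a, F a = δ * ((l.val : ℝ) - k.val) * ((j.val : ℝ) - i.val) := by
      rw [sum_eq_two_point Finset.univ F l k (Finset.mem_univ l) (Finset.mem_univ k) hlk'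
          (fun x _ hx1 hx2 => hFzero x hx1 hx2)]
      rw [hFl, hFk]; ring
    have hik' : (i.val : ℝ) < j.val := by exact_mod_cast hij
    have hkl'' : (k.val : ℝ) < l.val := by exact_mod_cast hkl
    have hpos : 0 < δ * ((l.val : ℝ) - k.val) * ((j.val : ℝ) - i.val) := by
      apply mul_pos (mul_pos hδpos (by linarith)) (by linarith)
    rw [hsplit]
    have : ∑ a, ∑ b, q a * ↑a.val * ↑b.val * μ a b = ∑ a, F a := by
      refine Finset.sum_congr rfl fun a _ => rfl
    rw [this, hFsum]
    linarith

/-- There exists an optimal multiplier with no "crossing" pattern: no indices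
`i < j < k < l` with `λ l i > 0` and `λ k j > 0`. -/
theorem exists_optimal_multiplier_no_crossing (m : ℕ) (hm : 1 ≤ m) (v q : Fin m → ℝ)
    (hv0 : ∀ i, 0 ≤ v i) (hvmono : ∀ i j : Fin m, i < j → v i < v j)
    (hq : ∀ i, 0 < q i) (hqsum : ∑ i, q i = 1) :
    ∃ lam : Fin m → Fin m → ℝ, IsMultiplier lam ∧
      (∀ lam' : Fin m → Fin m → ℝ, IsMultiplier lam' → g v q lam ≤ g v q lam') ∧
      (∀ i j k l : Fin m, i < j → j < k → k < l → ¬(0 < lam l i ∧ 0 < lam k j)) := by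
  obtain ⟨n, rfl⟩ : ∃ n, m = n + 1 := ⟨m - 1, (Nat.succ_pred_eq_of_pos hm).symm⟩
  have hdiag : IsMultiplier (fun k j : Fin (n+1) => if j = k then (1:ℝ) else 0) := by
    refine ⟨?_, ?_, ?_⟩
    · intro k j; dsimp only; split <;> norm_num
    · intro k j h; dsimp only
      rw [if_neg]
      intro he; rw [he] at h; exact lt_irrefl _ h
    · intro k
      rw [Finset.sum_ite_eq' (Finset.Iic k) k fun _ => (1:ℝ)]
      simp [Finset.mem_Iic]
  set K : Set (Fin (n+1) → Fin (n+1) → ℝ) := {lam | IsMultiplier lam} with hKdef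
  have hKc : IsCompact K := K_compact
  have hKne : K.Nonempty := ⟨_, hdiag⟩
  obtain ⟨lam0, hlam0, hmin⟩ := hKc.exists_isMinOn hKne ((cont_gmax v q).continuousOn)
  set K' : Set (Fin (n+1) → Fin (n+1) → ℝ) :=
    K ∩ {lam | gmax v q lam ≤ gmax v q lam0} with hK'def
  have hK'c : IsCompact K' := hKc.inter_right (isClosed_le (cont_gmax v q) continuous_const)
  have hK'ne : K'.Nonempty := ⟨lam0, hlam0, Set.mem_setOf.2 (le_refl _)⟩
  have hMcont : Continuous
      (fun lam : Fin (n+1) → Fin (n+1) → ℝ => ∑ a, ∑ b, q a * a.val * b.val * lam a b) :=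
    continuous_finset_sum _ fun a _ => continuous_finset_sum _ fun b _ =>
      continuous_const.mul (hcoord a b)
  obtain ⟨lamS, hlamS, hmax⟩ := hK'c.exists_isMaxOn hK'ne hMcont.continuousOn
  have hlamS1 : IsMultiplier lamS := hlamS.1
  have hlamS2 : gmax v q lamS ≤ gmax v q lam0 := hlamS.2
  refine ⟨lamS, hlamS1, ?_, ?_⟩
  · intro lam' hlam'
    rw [g_eq v q hv0 hq lamS, g_eq v q hv0 hq lam']
    exact le_trans hlamS2 (isMinOn_iff.1 hmin lam' hlam')
  · intro i j k l hij hjk hkl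
    rintro ⟨hli, hkj⟩
    obtain ⟨lam2, hm2, hS2, hM2⟩ := uncross v q hvmono hq lamS hlamS1 i j k l hij hjk hkl hli hkj
    have hg2 : gmax v q lam2 ≤ gmax v q lamS := by
      unfold gmax
      exact Finset.sup'_le _ _ fun t _ => (hS2 t).trans (Finset.le_sup' _ (Finset.mem_univ t))
    have hmem2 : lam2 ∈ K' := ⟨hm2, hg2.trans hlamS2⟩
    exact absurd hM2 (not_lt.2 (isMaxOn_iff.1 hmax lam2 hmem2))
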